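/- On the square grid ℤ², for any finite configuration of n coins whose span is a full a × b axis-aligned rectangle of lattice points (with a, b ≥ 1), we have n ≥ ⌈(a+b)/2⌉. -/

import Mathlib

/-- The span of a set of positions: the least superset closed under adding any
vertex adjacent to at least 2 vertices of the set. -/
def Span {P : Type*} (G : SimpleGraph P) (C : Set P) : Set P :=
  ⋂₀ {S : Set P | C ⊆ S ∧ ∀ p, (∃ a ∈ S, ∃ b ∈ S, a ≠ b ∧ G.Adj p a ∧ G.Adj p b) → p ∈ S}


/-- The square grid on ℤ². -/
def Grid : SimpleGraph (ℤ × ℤ) where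
  Adj p q := |p.1 - q.1| + |p.2 - q.2| = 1
  symm := ⟨by intro p q h; beta_reduce at h ⊢; rw [abs_sub_comm q.1 p.1, abs_sub_comm q.2 p.2]; exact h⟩
  loopless := ⟨by intro p; simp⟩

lemma grid_adj_iff (p q : ℤ × ℤ) :
    Grid.Adj p q ↔ q = (p.1+1, p.2) ∨ q = (p.1-1, p.2) ∨ q = (p.1, p.2+1) ∨ q = (p.1, p.2-1) := by
  show |p.1 - q.1| + |p.2 - q.2| = 1 ↔ _
  rcases abs_cases (p.1 - q.1) with ⟨h1, s1⟩ | ⟨h1, s1⟩ <;>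
    rcases abs_cases (p.2 - q.2) with ⟨h2, s2⟩ | ⟨h2, s2⟩ <;>
    rw [h1, h2] <;> simp only [Prod.ext_iff] <;> omega

/-- number of empty cells around p (within S counted as 0) -/
def ePerim (S : Finset (ℤ × ℤ)) (p : ℤ × ℤ) : ℕ :=
  (if (p.1+1, p.2) ∈ S then 0 else 1) + (if (p.1-1, p.2) ∈ S then 0 else 1) +
  (if (p.1, p.2+1) ∈ S then 0 else 1) + (if (p.1, p.2-1) ∈ S then 0 else 1)

def perim (S : Finset (ℤ × ℤ)) : ℕ := ∑ p ∈ S, ePerim S p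

def nbCount (S : Finset (ℤ × ℤ)) (p : ℤ × ℤ) : ℕ :=
  (if (p.1-1, p.2) ∈ S then 1 else 0) + (if (p.1+1, p.2) ∈ S then 1 else 0) +
  (if (p.1, p.2-1) ∈ S then 1 else 0) + (if (p.1, p.2+1) ∈ S then 1 else 0)

lemma ins_term (S : Finset (ℤ × ℤ)) (p v : ℤ × ℤ) (hp : p ∉ S) :
    (if v ∈ insert p S then (0:ℕ) else 1) + (if v = p then 1 else 0) =
      (if v ∈ S then (0:ℕ) else 1) := by
  by_cases h : v = p <;> simp [h, hp, Finset.mem_insert]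

lemma ePerim_insert (S : Finset (ℤ × ℤ)) (p q : ℤ × ℤ) (hp : p ∉ S) :
    ePerim (insert p S) q +
      ((if q = (p.1-1, p.2) then 1 else 0) + (if q = (p.1+1, p.2) then 1 else 0) +
       (if q = (p.1, p.2-1) then 1 else 0) + (if q = (p.1, p.2+1) then 1 else 0)) =
      ePerim S q := by
  have e1 : (q = (p.1-1, p.2)) = ((q.1+1, q.2) = p) := by
    simp only [Prod.ext_iff, eq_iff_iff]; constructor <;> intro h <;> omega
  have e2 : (q = (p.1+1, p.2)) = ((q.1-1, q.2) = p) := by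
    simp only [Prod.ext_iff, eq_iff_iff]; constructor <;> intro h <;> omega
  have e3 : (q = (p.1, p.2-1)) = ((q.1, q.2+1) = p) := by
    simp only [Prod.ext_iff, eq_iff_iff]; constructor <;> intro h <;> omega
  have e4 : (q = (p.1, p.2+1)) = ((q.1, q.2-1) = p) := by
    simp only [Prod.ext_iff, eq_iff_iff]; constructor <;> intro h <;> omega
  unfold ePerim
  simp only [e1, e2, e3, e4]
  have t1 := ins_term S p (q.1+1, q.2) hp
  have t2 := ins_term S p (q.1-1, q.2) hp
  have t3 := ins_term S p (q.1, q.2+1) hp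
  have t4 := ins_term S p (q.1, q.2-1) hp
  omega

lemma ePerim_self (S : Finset (ℤ × ℤ)) (p : ℤ × ℤ) (hp : p ∉ S) :
    ePerim (insert p S) p + nbCount S p = 4 := by
  have n1 : ¬ ((p.1+1, p.2) = p) := by simp only [Prod.ext_iff]; omega
  have n2 : ¬ ((p.1-1, p.2) = p) := by simp only [Prod.ext_iff]; omega
  have n3 : ¬ ((p.1, p.2+1) = p) := by simp only [Prod.ext_iff]; omega
  have n4 : ¬ ((p.1, p.2-1) = p) := by simp only [Prod.ext_iff]; omega
  unfold ePerim nbCount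
  simp only [Finset.mem_insert, n1, n2, n3, n4, false_or]
  split_ifs <;> omega

lemma nbCount_ge_two (S : Finset (ℤ × ℤ)) (p q₁ q₂ : ℤ × ℤ) (hq1 : q₁ ∈ S) (hq2 : q₂ ∈ S)
    (hne : q₁ ≠ q₂) (a1 : Grid.Adj p q₁) (a2 : Grid.Adj p q₂) : 2 ≤ nbCount S p := by
  rcases (grid_adj_iff p q₁).mp a1 with rfl | rfl | rfl | rfl <;>
    rcases (grid_adj_iff p q₂).mp a2 with rfl | rfl | rfl | rfl <;>
    first
      | exact absurd rfl hne
      | (unfold nbCount; simp only [hq1, hq2, if_true]; split_ifs <;> omega)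

lemma perim_insert_le (S : Finset (ℤ × ℤ)) (p q₁ q₂ : ℤ × ℤ) (hp : p ∉ S)
    (hq1 : q₁ ∈ S) (hq2 : q₂ ∈ S) (hne : q₁ ≠ q₂)
    (a1 : Grid.Adj p q₁) (a2 : Grid.Adj p q₂) :
    perim (insert p S) ≤ perim S := by
  have hk := nbCount_ge_two S p q₁ q₂ hq1 hq2 hne a1 a2
  have hsum : ∑ q ∈ S, ePerim (insert p S) q + nbCount S p = perim S := by
    unfold perim
    have : ∀ q ∈ S, ePerim S q = ePerim (insert p S) q +
        ((if q = (p.1-1, p.2) then 1 else 0) + (if q = (p.1+1, p.2) then 1 else 0) +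
         (if q = (p.1, p.2-1) then 1 else 0) + (if q = (p.1, p.2+1) then 1 else 0)) := by
      intro q _; exact (ePerim_insert S p q hp).symm
    rw [Finset.sum_congr rfl this, Finset.sum_add_distrib]
    have hb : ∑ q ∈ S,
        ((if q = (p.1-1, p.2) then (1:ℕ) else 0) + (if q = (p.1+1, p.2) then 1 else 0) +
         (if q = (p.1, p.2-1) then 1 else 0) + (if q = (p.1, p.2+1) then 1 else 0)) =
        nbCount S p := by
      rw [Finset.sum_add_distrib, Finset.sum_add_distrib, Finset.sum_add_distrib]
      unfold nbCount
      rw [Finset.sum_ite_eq' S (p.1-1, p.2) (fun _ => 1),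
          Finset.sum_ite_eq' S (p.1+1, p.2) (fun _ => 1),
          Finset.sum_ite_eq' S (p.1, p.2-1) (fun _ => 1),
          Finset.sum_ite_eq' S (p.1, p.2+1) (fun _ => 1)]
    omega
  have hins : perim (insert p S) = ePerim (insert p S) p + ∑ q ∈ S, ePerim (insert p S) q := by
    unfold perim; rw [Finset.sum_insert hp]
  have hself := ePerim_self S p hp
  omega

lemma subset_span {P : Type*} (G : SimpleGraph P) (C : Set P) : C ⊆ Span G C :=
  fun p hp => Set.mem_sInter.mpr fun _ hS => hS.1 hp

lemma span_closed {P : Type*} (G : SimpleGraph P) (C : Set P) (p : P)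
    (h : ∃ a ∈ Span G C, ∃ b ∈ Span G C, a ≠ b ∧ G.Adj p a ∧ G.Adj p b) : p ∈ Span G C := by
  obtain ⟨u, hu, v, hv, huv, au, av⟩ := h
  intro S hS
  exact hS.2 p ⟨u, hu S hS, v, hv S hS, huv, au, av⟩

lemma span_subset {P : Type*} (G : SimpleGraph P) (C S : Set P) (hCS : C ⊆ S)
    (hcl : ∀ p, (∃ a ∈ S, ∃ b ∈ S, a ≠ b ∧ G.Adj p a ∧ G.Adj p b) → p ∈ S) :
    Span G C ⊆ S :=
  Set.sInter_subset_of_mem ⟨hCS, hcl⟩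

lemma perim_rect_le (C R : Finset (ℤ × ℤ)) (hspan : Span Grid ↑C = ↑R) :
    perim R ≤ perim C := by
  have hCR : C ⊆ R := by
    rw [← Finset.coe_subset, ← hspan]; exact subset_span Grid ↑C
  have main : ∀ n (S : Finset (ℤ × ℤ)), (R \ S).card ≤ n → C ⊆ S → S ⊆ R →
      perim S ≤ perim C → perim R ≤ perim C := by
    intro n
    induction n with
    | zero =>
      intro S h0 _ hSR hps
      have : R \ S = ∅ := Finset.card_eq_zero.mp (Nat.le_zero.mp h0)
      have hRS : R ⊆ S := by
        intro x hx
        by_contra hxS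
        exact absurd (Finset.mem_sdiff.mpr ⟨hx, hxS⟩) (by simp [this])
      have : S = R := Finset.Subset.antisymm hSR hRS
      rwa [this] at hps
    | succ n ih =>
      intro S hcard hCS hSR hps
      by_cases hRS : R ⊆ S
      · have : S = R := Finset.Subset.antisymm hSR hRS
        rwa [this] at hps
      · have hex : ∃ p ∈ R, p ∉ S ∧
            ∃ q₁ ∈ S, ∃ q₂ ∈ S, q₁ ≠ q₂ ∧ Grid.Adj p q₁ ∧ Grid.Adj p q₂ := by
          by_contra hno
          push_neg at hno
          apply hRS
          rw [← Finset.coe_subset, ← hspan]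
          apply span_subset
          · exact_mod_cast hCS
          · intro p hp
            obtain ⟨u, hu, v, hv, huv, au, av⟩ := hp
            have hu' : u ∈ S := hu
            have hv' : v ∈ S := hv
            have hpR : p ∈ R := by
              have : p ∈ Span Grid ↑C :=
                span_closed Grid (↑C : Set (ℤ × ℤ)) p
                  ⟨u, (by rw [hspan]; exact_mod_cast hSR hu'), v,
                   (by rw [hspan]; exact_mod_cast hSR hv'), huv, au, av⟩
              rw [hspan] at this; exact_mod_cast this
            by_cases hpS : p ∈ S
            · exact hpS
            · exact absurd av (hno p hpR hpS u hu' v hv' huv au)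
        obtain ⟨p, hpR, hpS, q₁, hq1, q₂, hq2, hne, a1, a2⟩ := hex
        apply ih (insert p S)
        · have : R \ insert p S = (R \ S).erase p := by
            ext x; simp [Finset.mem_sdiff, Finset.mem_insert, Finset.mem_erase]; tauto
          rw [this]
          have hpmem : p ∈ R \ S := Finset.mem_sdiff.mpr ⟨hpR, hpS⟩
          have := Finset.card_erase_of_mem hpmem
          omega
        · exact hCS.trans (Finset.subset_insert p S)
        · exact Finset.insert_subset hpR hSR
        · exact le_trans (perim_insert_le S p q₁ q₂ hpS hq1 hq2 hne a1 a2) hps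
  exact main (R \ C).card C le_rfl le_rfl hCR le_rfl

lemma perim_le (S : Finset (ℤ × ℤ)) : perim S ≤ 4 * S.card := by
  unfold perim
  calc ∑ p ∈ S, ePerim S p ≤ ∑ p ∈ S, 4 := by
        apply Finset.sum_le_sum
        intro p _
        unfold ePerim
        split_ifs <;> omega
    _ = 4 * S.card := by rw [Finset.sum_const, smul_eq_mul]; ring

lemma sum_flip (S : Finset (ℤ × ℤ)) (P : ℤ × ℤ → Prop) [DecidablePred P] :
    ∑ p ∈ S, (if P p then (0:ℕ) else 1) = (S.filter (fun p => ¬ P p)).card := by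
  rw [Finset.card_filter]
  apply Finset.sum_congr rfl
  intro p _
  by_cases h : P p <;> simp [h]

lemma perim_rect (a b : ℕ) (x₀ y₀ : ℤ) (ha : 1 ≤ a) (hb : 1 ≤ b) :
    perim (Finset.Icc x₀ (x₀ + (a : ℤ) - 1) ×ˢ Finset.Icc y₀ (y₀ + (b : ℤ) - 1)) =
      2 * a + 2 * b := by
  set R := Finset.Icc x₀ (x₀ + (a : ℤ) - 1) ×ˢ Finset.Icc y₀ (y₀ + (b : ℤ) - 1) with hR
  have hmem : ∀ u v : ℤ, ((u, v) ∈ R) ↔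
      (x₀ ≤ u ∧ u ≤ x₀ + (a:ℤ) - 1 ∧ y₀ ≤ v ∧ v ≤ y₀ + (b:ℤ) - 1) := by
    intro u v
    simp [hR, Finset.mem_product, Finset.mem_Icc]
    tauto
  have cardIccb : (Finset.Icc y₀ (y₀ + (b:ℤ) - 1)).card = b := by
    rw [Int.card_Icc]; omega
  have cardIcca : (Finset.Icc x₀ (x₀ + (a:ℤ) - 1)).card = a := by
    rw [Int.card_Icc]; omega
  have e1 : ∑ p ∈ R, (if (p.1+1, p.2) ∈ R then (0:ℕ) else 1) = b := by
    rw [sum_flip]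
    have : R.filter (fun p => ¬ (p.1+1, p.2) ∈ R) =
        ({x₀ + (a:ℤ) - 1} : Finset ℤ) ×ˢ Finset.Icc y₀ (y₀ + (b:ℤ) - 1) := by
      ext ⟨u, v⟩
      simp only [Finset.mem_filter, Finset.mem_product, Finset.mem_singleton, Finset.mem_Icc,
        hmem]
      omega
    rw [this, Finset.card_product, Finset.card_singleton, cardIccb, one_mul]
  have e2 : ∑ p ∈ R, (if (p.1-1, p.2) ∈ R then (0:ℕ) else 1) = b := by
    rw [sum_flip]
    have : R.filter (fun p => ¬ (p.1-1, p.2) ∈ R) =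
        ({x₀} : Finset ℤ) ×ˢ Finset.Icc y₀ (y₀ + (b:ℤ) - 1) := by
      ext ⟨u, v⟩
      simp only [Finset.mem_filter, Finset.mem_product, Finset.mem_singleton, Finset.mem_Icc,
        hmem]
      omega
    rw [this, Finset.card_product, Finset.card_singleton, cardIccb, one_mul]
  have e3 : ∑ p ∈ R, (if (p.1, p.2+1) ∈ R then (0:ℕ) else 1) = a := by
    rw [sum_flip]
    have : R.filter (fun p => ¬ (p.1, p.2+1) ∈ R) =
        Finset.Icc x₀ (x₀ + (a:ℤ) - 1) ×ˢ ({y₀ + (b:ℤ) - 1} : Finset ℤ) := by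
      ext ⟨u, v⟩
      simp only [Finset.mem_filter, Finset.mem_product, Finset.mem_singleton, Finset.mem_Icc,
        hmem]
      omega
    rw [this, Finset.card_product, Finset.card_singleton, cardIcca, mul_one]
  have e4 : ∑ p ∈ R, (if (p.1, p.2-1) ∈ R then (0:ℕ) else 1) = a := by
    rw [sum_flip]
    have : R.filter (fun p => ¬ (p.1, p.2-1) ∈ R) =
        Finset.Icc x₀ (x₀ + (a:ℤ) - 1) ×ˢ ({y₀} : Finset ℤ) := by
      ext ⟨u, v⟩
      simp only [Finset.mem_filter, Finset.mem_product, Finset.mem_singleton, Finset.mem_Icc,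
        hmem]
      omega
    rw [this, Finset.card_product, Finset.card_singleton, cardIcca, mul_one]
  unfold perim ePerim
  rw [Finset.sum_add_distrib, Finset.sum_add_distrib, Finset.sum_add_distrib, e1, e2, e3, e4]
  omega

/-- If the span of a configuration of `n` coins is a full `a × b` rectangle
(`a, b ≥ 1`), then `n ≥ ⌈(a+b)/2⌉`, where `a + b` is the half-perimeter. -/
theorem coins_ge_half_perimeter (C : Finset (ℤ × ℤ)) (a b : ℕ) (x₀ y₀ : ℤ)
    (ha : 1 ≤ a) (hb : 1 ≤ b)
    (hspan : Span Grid ↑C =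
      ↑(Finset.Icc x₀ (x₀ + (a : ℤ) - 1) ×ˢ Finset.Icc y₀ (y₀ + (b : ℤ) - 1))) :
    (a + b + 1) / 2 ≤ C.card := by
  have h1 := perim_rect_le C _ hspan
  have h2 := perim_le C
  have h3 := perim_rect a b x₀ y₀ ha hb
  omega
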